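/- If R is a right hereditary right Noetherian ring, then every injective right R-module is dual Baer. -/

import Mathlib

universe u v

/-- `M` is a dual Baer module: for every submodule `N` of `M`, the right ideal
`Hom(M,N)` of `End(M)` is generated by an idempotent. -/
def IsDualBaerModule (R : Type u) [Ring R] (M : Type v) [AddCommGroup M]
    [Module R M] : Prop :=
  ∀ N : Submodule R M, ∃ e : Module.End R M, IsIdempotentElem e ∧
    {f : Module.End R M | LinearMap.range f ≤ N} = Set.range fun s => e * s

set_option maxHeartbeats 1000000
set_option synthInstance.maxHeartbeats 400000

open LinearMap

section Aux
variable {S : Type u} [Ring S]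


/-- Injectivity of `v`-indexed products. -/
lemma pi_injective {ι : Type v} {M : Type v} [AddCommGroup M] [Module S M]
    (hM : Module.Injective S M) : Module.Injective S (ι → M) where
  out X Y _ _ _ _ f hf g := by
    choose hs hhs using fun i : ι => hM.out f hf ((LinearMap.proj i : (ι → M) →ₗ[S] M) ∘ₗ g)
    exact ⟨LinearMap.pi hs, fun x => funext fun i => hhs i x⟩


/-- The quotient `S ⧸ span {a*k}` is small when `S⧸A` is small, `A` f.g., `A ≤ K`. -/
lemma small_quot_aux (A K : Submodule S S) [Small.{v} (S ⧸ A)] (hfg : A.FG) (hAK : A ≤ K) :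
    Small.{v} (S ⧸ Submodule.span S {x : S | ∃ a ∈ A, ∃ k ∈ K, x = a * k}) := by
  classical
  set B := Submodule.span S {x : S | ∃ a ∈ A, ∃ k ∈ K, x = a * k} with hB
  obtain ⟨T, hT⟩ := hfg
  have hmkA : Function.Surjective (Submodule.Quotient.mk (p := A)) :=
    Submodule.Quotient.mk_surjective A
  let θ : (S ⧸ A) → S := Function.surjInv hmkA
  have hθ : ∀ x : S ⧸ A, Submodule.Quotient.mk (θ x) = x := fun x =>
    Function.surjInv_eq hmkA x
  have hθA : ∀ (x : S ⧸ A) (s : S), Submodule.Quotient.mk (p := A) s = x → θ x - s ∈ A := by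
    intro x s hs
    have : Submodule.Quotient.mk (p := A) (θ x) = Submodule.Quotient.mk (p := A) s := by
      rw [hθ, hs]
    exact (Submodule.Quotient.eq A).mp this
  refine small_of_surjective (f := fun p : (S ⧸ A) × (↥T → S ⧸ A) =>
    (Submodule.Quotient.mk (p := B) (θ p.1 + ∑ i ∈ T.attach, θ (p.2 i) * (i : S)))) ?_
  intro y
  obtain ⟨s, rfl⟩ := Submodule.Quotient.mk_surjective B y
  -- u := θ (mk s) - s ∈ A
  set u : S := θ (Submodule.Quotient.mk s) - s with hu
  have huA : u ∈ A := hθA _ s rfl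
  have huT : u ∈ Submodule.span S (↑T : Set S) := by rw [hT]; exact huA
  obtain ⟨c, -, hc⟩ := Submodule.mem_span_finset.mp huT
  refine ⟨⟨Submodule.Quotient.mk s, fun i => Submodule.Quotient.mk (-(c i))⟩, ?_⟩
  rw [Submodule.Quotient.eq]
  have hTA : ∀ i : ↥T, (i : S) ∈ A := fun i => by
    rw [← hT]; exact Submodule.subset_span i.2
  have hd : ∀ i : ↥T, θ (Submodule.Quotient.mk (-(c i))) + c i ∈ A := by
    intro i
    have := hθA (Submodule.Quotient.mk (-(c i))) (-(c i)) rfl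
    simpa [sub_neg_eq_add] using this
  have hsum : (θ (Submodule.Quotient.mk s) + ∑ i ∈ T.attach, θ (Submodule.Quotient.mk (-(c i))) * (i : S)) - s
      = ∑ i ∈ T.attach, (θ (Submodule.Quotient.mk (-(c i))) + c i) * (i : S) := by
    have h1 : ∑ i ∈ T.attach, (θ (Submodule.Quotient.mk (-(c i))) + c i) * (i : S)
        = (∑ i ∈ T.attach, θ (Submodule.Quotient.mk (-(c i))) * (i : S))
          + ∑ i ∈ T.attach, c i * (i : S) := by
      rw [← Finset.sum_add_distrib]
      exact Finset.sum_congr rfl fun i _ => add_mul _ _ _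
    have h2 : ∑ i ∈ T.attach, c i * (i : S) = u := by
      rw [← hc, ← Finset.sum_attach T (fun i => c i • i)]
      exact Finset.sum_congr rfl fun i _ => rfl
    rw [h1, h2, hu]; abel
  rw [hsum]
  refine Submodule.sum_mem _ fun i _ => ?_
  exact Submodule.subset_span ⟨_, hd i, _, hAK (hTA i), rfl⟩

/-- Baer-type extension along an ideal `K ⊇ A` into an `A`-torsion `v`-injective module. -/
lemma baer_ext {W : Type v} [AddCommGroup W] [Module S W]
    (hW : Module.Injective S W)
    (A K : Submodule S S) (hfg : A.FG) [Small.{v} (S ⧸ A)]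
    (hAK : A ≤ K) (htor : ∀ a ∈ A, ∀ w : W, a • w = 0)
    (h : ↥K →ₗ[S] W) :
    ∃ H : S →ₗ[S] W, ∀ x (hx : x ∈ K), H x = h ⟨x, hx⟩ := by
  classical
  set B := Submodule.span S {x : S | ∃ a ∈ A, ∃ k ∈ K, x = a * k} with hBdef
  have hBK : B ≤ K := by
    rw [hBdef, Submodule.span_le]
    rintro x ⟨a, ha, k, hk, rfl⟩
    exact K.smul_mem a hk
  have hkill : ∀ x ∈ B, ∀ hx : x ∈ K, h ⟨x, hx⟩ = 0 := by
    intro x hxB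
    refine Submodule.span_induction ?_ ?_ ?_ ?_ hxB
    · rintro x ⟨a, ha, k, hk, rfl⟩ hm
      have : (⟨a * k, hm⟩ : ↥K) = a • ⟨k, hk⟩ := rfl
      rw [this, map_smul]
      exact htor a ha _
    · intro hx
      have : (⟨0, hx⟩ : ↥K) = 0 := rfl
      rw [this, map_zero]
    · intro x y hxB hyB ihx ihy hxy
      have hxK : x ∈ K := hBK hxB
      have hyK : y ∈ K := hBK hyB
      have : (⟨x + y, hxy⟩ : ↥K) = ⟨x, hxK⟩ + ⟨y, hyK⟩ := rfl
      rw [this, map_add, ihx hxK, ihy hyK, add_zero]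
    · intro s x hxB ih hsx
      have hxK : x ∈ K := hBK hxB
      have : (⟨s • x, hsx⟩ : ↥K) = s • ⟨x, hxK⟩ := rfl
      rw [this, map_smul, ih hxK, smul_zero]
  -- Quotients
  set B' : Submodule S ↥K := B.comap K.subtype with hB'
  let hbar : (↥K ⧸ B') →ₗ[S] W := B'.liftQ h (fun x hx => by
    obtain ⟨x, hxK⟩ := x; exact hkill x hx hxK)
  let ι : (↥K ⧸ B') →ₗ[S] (S ⧸ B) := Submodule.mapQ B' B K.subtype (fun x hx => hx)
  have hι : Function.Injective ι := by
    rw [← LinearMap.ker_eq_bot, eq_bot_iff]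
    intro x hx
    obtain ⟨⟨x, hxK⟩, rfl⟩ := Submodule.Quotient.mk_surjective B' x
    simp only [LinearMap.mem_ker, ι, Submodule.mapQ_apply, Submodule.subtype_apply] at hx
    have hxB : x ∈ B := (Submodule.Quotient.mk_eq_zero B).mp hx
    simpa using (Submodule.Quotient.mk_eq_zero B').mpr (show (⟨x, hxK⟩ : ↥K) ∈ B' from hxB)
  -- smallness
  have hsmallY : Small.{v} (S ⧸ B) := small_quot_aux A K hfg hAK
  have hsmallX : Small.{v} (↥K ⧸ B') := small_of_injective hι
  -- shrink and extend
  let eX := Shrink.linearEquiv S (↥K ⧸ B')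
  let eY := Shrink.linearEquiv S (S ⧸ B)
  obtain ⟨Hh, hHh⟩ := hW.out (X := Shrink.{v} (↥K ⧸ B')) (Y := Shrink.{v} (S ⧸ B))
    (eY.symm.toLinearMap ∘ₗ ι ∘ₗ eX.toLinearMap)
    (by
      intro a b hab
      apply eX.injective
      apply hι
      apply eY.symm.injective
      exact hab)
    (hbar ∘ₗ eX.toLinearMap)
  refine ⟨(Hh ∘ₗ eY.symm.toLinearMap) ∘ₗ B.mkQ, fun x hx => ?_⟩
  have h1 : (B.mkQ x : S ⧸ B) = ι (Submodule.Quotient.mk (⟨x, hx⟩ : ↥K)) := by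
    simp [ι, Submodule.mapQ_apply]
  have h2 := hHh (eX.symm (Submodule.Quotient.mk (⟨x, hx⟩ : ↥K)))
  simp only [LinearMap.comp_apply, LinearEquiv.coe_coe, LinearEquiv.apply_symm_apply] at h2 ⊢
  rw [h1, ← LinearEquiv.apply_symm_apply eX (Submodule.Quotient.mk (⟨x, hx⟩ : ↥K))] at *
  rw [h2]
  simp [hbar, Submodule.liftQ_apply]

theorem main_dual_baer {M : Type v} [AddCommGroup M] [Module S M]
    (hproj : ∀ K : Submodule S S, Module.Projective S ↥K)
    (hnoe : IsNoetherian S S)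
    (hinj : Module.Injective S M) :
    IsDualBaerModule S M := by
  classical
  intro N
  -- the image of `S` in `AddMonoid.End M`
  let f₀ : S →+* AddMonoid.End M := Module.toAddMonoidEnd S M
  let S₀ := f₀.range
  let ρ : S → ↥S₀ := fun s => ⟨f₀ s, ⟨s, rfl⟩⟩
  have hρsur : ∀ φ : ↥S₀, ∃ s : S, ρ s = φ := by
    rintro ⟨_, s, rfl⟩; exact ⟨s, rfl⟩
  have hρadd : ∀ s t : S, ρ (s + t) = ρ s + ρ t := fun s t => Subtype.ext (f₀.map_add s t)
  have hρmul : ∀ s t : S, ρ (s * t) = ρ s * ρ t := fun s t => Subtype.ext (f₀.map_mul s t)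
  have key : ∀ (s : S) (m : M), (ρ s) • m = s • m := fun s m => rfl
  -- the annihilator of M
  let F : S →ₗ[S] AddMonoid.End M :=
    { toFun := fun s => f₀ s
      map_add' := f₀.map_add
      map_smul' := by
        intro s x; refine AddMonoidHom.ext fun m => ?_
        show ((s * x) • m) = (s • (f₀ x)) m
        rw [mul_smul]; rfl }
  let A : Submodule S S := LinearMap.ker F
  have htorM : ∀ a ∈ A, ∀ m : M, a • m = 0 := by
    intro a ha m
    have h0 : f₀ a = 0 := ha
    show (f₀ a) m = 0
    rw [h0]; rfl
  have hAfg : A.FG := IsNoetherian.noetherian A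
  have hsmallSA : Small.{v} (S ⧸ A) := by
    have hinj' : Function.Injective (A.liftQ F (le_refl _)) := by
      rw [← LinearMap.ker_eq_bot, Submodule.ker_liftQ_eq_bot]
      exact le_refl _
    exact small_of_injective hinj'
  -- the trace submodule
  let I := {f : Module.End S M // LinearMap.range f ≤ N}
  let Tr : Submodule S M := ⨆ i : I, LinearMap.range i.1
  have hTrN : Tr ≤ N := iSup_le fun i => i.2
  have hfTr : ∀ (i : I) (m : M), i.1 m ∈ Tr :=
    fun i m => le_iSup (fun i : I => LinearMap.range i.1) i ⟨m, rfl⟩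
  let Tr₀ : Submodule ↥S₀ M :=
    { carrier := Tr
      add_mem' := fun ha hb => Tr.add_mem ha hb
      zero_mem' := Tr.zero_mem
      smul_mem' := by
        intro φ m hm
        obtain ⟨s, rfl⟩ := hρsur φ
        exact Tr.smul_mem s hm }
  -- Baer property of Tr₀ over S₀
  have hbaer : Module.Baer ↥S₀ ↥Tr₀ := by
    intro J g
    let K : Submodule S S :=
      { carrier := {s : S | ρ s ∈ J}
        add_mem' := by intro a b ha hb; show ρ (a + b) ∈ J; rw [hρadd]; exact J.add_mem ha hb
        zero_mem' := by show ρ 0 ∈ J; have : ρ 0 = 0 := Subtype.ext f₀.map_zero; rw [this]; exact J.zero_mem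
        smul_mem' := by
          intro c x hx
          show ρ (c * x) ∈ J
          rw [hρmul]
          exact J.smul_mem (ρ c) hx }
    have hAK : A ≤ K := by
      intro a ha
      show ρ a ∈ J
      have : ρ a = 0 := Subtype.ext (show f₀ a = 0 from ha)
      rw [this]; exact J.zero_mem
    obtain ⟨T, hT⟩ := IsNoetherian.noetherian K
    have hTK : ∀ t : ↥T, (t : S) ∈ K := fun t => by
      rw [← hT]; exact Submodule.subset_span t.2
    -- gS
    let gS : ↥K →ₗ[S] M :=
      { toFun := fun k => (g ⟨ρ k.1, k.2⟩ : ↥Tr₀).1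
        map_add' := by
          intro a b
          have h1 : (⟨ρ (a.1 + b.1), (a + b).2⟩ : ↥J) = ⟨ρ a.1, a.2⟩ + ⟨ρ b.1, b.2⟩ :=
            Subtype.ext (by simpa using hρadd a.1 b.1)
          show (g ⟨ρ (a.1 + b.1), _⟩ : ↥Tr₀).1 = (g ⟨ρ a.1, a.2⟩ : ↥Tr₀).1 + (g ⟨ρ b.1, b.2⟩ : ↥Tr₀).1
          rw [h1, map_add]; rfl
        map_smul' := by
          intro c k
          have h1 : (⟨ρ (c * k.1), (c • k).2⟩ : ↥J) = ρ c • ⟨ρ k.1, k.2⟩ :=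
            Subtype.ext (by simpa using hρmul c k.1)
          show (g ⟨ρ (c * k.1), _⟩ : ↥Tr₀).1 = c • (g ⟨ρ k.1, k.2⟩ : ↥Tr₀).1
          rw [h1, map_smul]
          show (ρ c) • ((g ⟨ρ k.1, k.2⟩ : ↥Tr₀) : M) = c • _
          exact key c _ }
    have hginTr : ∀ k : ↥K, gS k ∈ Tr := fun k => (g ⟨ρ k.1, k.2⟩).2
    -- finite family
    have hex := fun t : ↥T =>
      Submodule.exists_finset_of_mem_iSup (fun i : I => LinearMap.range i.1) (hginTr ⟨t.1, hTK t⟩)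
    choose Fs hFs using hex
    let Fb : Finset I := T.attach.biUnion Fs
    -- the map Φ
    let Φ : (↥Fb → M) →ₗ[S] M := ∑ j : ↥Fb, (j.1.1 : Module.End S M) ∘ₗ LinearMap.proj j
    have hΦapply : ∀ v : ↥Fb → M, Φ v = ∑ j : ↥Fb, j.1.1 (v j) := by
      intro v
      show (∑ j : ↥Fb, (j.1.1 : Module.End S M) ∘ₗ LinearMap.proj j) v = _
      rw [LinearMap.sum_apply]
      rfl
    have hPle : LinearMap.range Φ ≤ Tr := by
      rintro x ⟨v, rfl⟩
      rw [hΦapply]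
      exact Submodule.sum_mem _ fun j _ => hfTr j.1 (v j)
    have hrangege : ∀ j : I, j ∈ Fb → LinearMap.range j.1 ≤ LinearMap.range Φ := by
      rintro j hj x ⟨m, rfl⟩
      refine ⟨Pi.single (⟨j, hj⟩ : ↥Fb) m, ?_⟩
      rw [hΦapply]
      rw [Finset.sum_eq_single (⟨j, hj⟩ : ↥Fb)]
      · rw [Pi.single_eq_same]
      · intro b _ hb
        rw [Pi.single_eq_of_ne hb, map_zero]
      · intro hmem
        exact absurd (Finset.mem_univ _) hmem
    have hgens : ∀ t : ↥T, gS ⟨t.1, hTK t⟩ ∈ LinearMap.range Φ := by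
      intro t
      have h1 : (⨆ i ∈ Fs t, LinearMap.range (i : I).1) ≤ LinearMap.range Φ := by
        refine iSup₂_le fun i hi => hrangege i ?_
        exact Finset.mem_biUnion.mpr ⟨t, Finset.mem_attach _ _, hi⟩
      exact h1 (hFs t)
    have hrange : ∀ k : ↥K, gS k ∈ LinearMap.range Φ := by
      rintro ⟨x, hx⟩
      have hx' : x ∈ Submodule.span S (↑T : Set S) := by rw [hT]; exact hx
      refine Submodule.span_induction ?_ ?_ ?_ ?_ hx' (p := fun x _ => ∀ hx : x ∈ K, gS ⟨x, hx⟩ ∈ LinearMap.range Φ) hx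
      · intro y hy hyK
        have : (⟨y, hyK⟩ : ↥K) = ⟨y, hTK ⟨y, hy⟩⟩ := rfl
        exact this ▸ hgens ⟨y, hy⟩
      · intro h0
        have : (⟨(0 : S), h0⟩ : ↥K) = 0 := rfl
        rw [this, map_zero]; exact Submodule.zero_mem _
      · intro a b haT hbT iha ihb hab
        have haK : a ∈ K := hT ▸ haT
        have hbK : b ∈ K := hT ▸ hbT
        have : (⟨a + b, hab⟩ : ↥K) = ⟨a, haK⟩ + ⟨b, hbK⟩ := rfl
        rw [this, map_add]
        exact Submodule.add_mem _ (iha haK) (ihb hbK)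
      · intro c a haT iha hca
        have haK : a ∈ K := hT ▸ haT
        have : (⟨c • a, hca⟩ : ↥K) = c • ⟨a, haK⟩ := rfl
        rw [this, map_smul]
        exact Submodule.smul_mem _ _ (iha haK)
    -- corestrict and lift through Φ
    let g2 : ↥K →ₗ[S] ↥(LinearMap.range Φ) :=
      gS.codRestrict (LinearMap.range Φ) hrange
    haveI := hproj K
    obtain ⟨hlift, hhlift⟩ := Module.projective_lifting_property Φ.rangeRestrict g2
      (LinearMap.surjective_rangeRestrict Φ)
    -- extend hlift over S
    have hWinj : Module.Injective S (↥Fb → M) := pi_injective hinj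
    have htorW : ∀ a ∈ A, ∀ w : ↥Fb → M, a • w = 0 := fun a ha w => funext fun j => htorM a ha (w j)
    obtain ⟨H, hH⟩ := baer_ext hWinj A K hAfg hAK htorW hlift
    -- the element t
    have htTr : Φ (H 1) ∈ Tr := hPle ⟨H 1, rfl⟩
    have hts : ∀ (s : S) (hs : s ∈ K), s • Φ (H 1) = gS ⟨s, hs⟩ := by
      intro s hs
      have c1 : s • Φ (H 1) = Φ (H s) := by
        rw [← map_smul Φ, ← map_smul H, smul_eq_mul, mul_one]
      have c2 : Φ.rangeRestrict (hlift ⟨s, hs⟩) = g2 ⟨s, hs⟩ := by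
        rw [← LinearMap.comp_apply, hhlift]
      have c3 : Φ (hlift ⟨s, hs⟩) = gS ⟨s, hs⟩ := congrArg Subtype.val c2
      rw [c1, hH s hs, c3]
    refine ⟨LinearMap.toSpanSingleton ↥S₀ ↥Tr₀ ⟨Φ (H 1), htTr⟩, ?_⟩
    intro x hx
    obtain ⟨s, rfl⟩ := hρsur x
    have hsK : s ∈ K := hx
    apply Subtype.ext
    show ((ρ s • (⟨Φ (H 1), htTr⟩ : ↥Tr₀)) : M) = ((g ⟨ρ s, hx⟩ : ↥Tr₀) : M)
    have : ((ρ s • (⟨Φ (H 1), htTr⟩ : ↥Tr₀)) : M) = (ρ s) • Φ (H 1) := rfl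
    rw [this, key, hts s hsK]
    rfl
  -- split the inclusion Tr₀ ↪ M
  obtain ⟨π₀, hπ₀⟩ := hbaer.extension_property Tr₀.subtype Subtype.val_injective LinearMap.id
  have hfix : ∀ (x : M) (hx : x ∈ Tr), ((π₀ x : ↥Tr₀) : M) = x := by
    intro x hx
    have h1 : π₀ (Tr₀.subtype ⟨x, hx⟩) = ⟨x, hx⟩ := by
      rw [← LinearMap.comp_apply, hπ₀]; rfl
    exact congrArg Subtype.val h1
  let e : Module.End S M :=
    { toFun := fun m => ((π₀ m : ↥Tr₀) : M)
      map_add' := fun a b => by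
        show ((π₀ (a + b) : ↥Tr₀) : M) = ((π₀ a : ↥Tr₀) : M) + ((π₀ b : ↥Tr₀) : M)
        rw [map_add]; rfl
      map_smul' := fun s m => by
        show ((π₀ (s • m) : ↥Tr₀) : M) = s • ((π₀ m : ↥Tr₀) : M)
        have h1 : s • m = (ρ s) • m := rfl
        rw [h1, map_smul]
        show (ρ s) • ((π₀ m : ↥Tr₀) : M) = s • _
        exact key s _ }
  have heTr : ∀ m : M, e m ∈ Tr := fun m => (π₀ m).2
  have hee : ∀ (x : M), x ∈ Tr → e x = x := fun x hx => hfix x hx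
  refine ⟨e, ?_, ?_⟩
  · refine LinearMap.ext fun m => ?_
    show e (e m) = e m
    exact hee (e m) (heTr m)
  · ext f
    simp only [Set.mem_setOf_eq, Set.mem_range]
    constructor
    · intro hf
      refine ⟨f, ?_⟩
      refine LinearMap.ext fun m => ?_
      show e (f m) = f m
      exact hee (f m) (hfTr ⟨f, hf⟩ m)
    · rintro ⟨s, rfl⟩
      rintro x ⟨m, rfl⟩
      show e (s m) ∈ N
      exact hTrN (heTr (s m))

end Aux


/-- Over a right hereditary right Noetherian ring, every injective right module is
dual Baer.  Right `R`-modules are `Rᵐᵒᵖ`-modules. -/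
theorem stmt6 (R : Type u) [Ring R]
    (hher : ∀ I : Submodule Rᵐᵒᵖ R, Module.Projective Rᵐᵒᵖ I)
    (hnoeth : IsNoetherian Rᵐᵒᵖ R)
    (M : Type v) [AddCommGroup M] [Module Rᵐᵒᵖ M] [Module.Injective Rᵐᵒᵖ M] :
    IsDualBaerModule Rᵐᵒᵖ M := by
  let e : Rᵐᵒᵖ ≃ₗ[Rᵐᵒᵖ] R :=
    { toFun := MulOpposite.unop
      invFun := MulOpposite.op
      left_inv := fun _ => rfl
      right_inv := fun _ => rfl
      map_add' := fun _ _ => rfl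
      map_smul' := fun _ _ => rfl }
  have hnoe : IsNoetherian Rᵐᵒᵖ Rᵐᵒᵖ := isNoetherian_of_linearEquiv e.symm
  have hproj : ∀ K : Submodule Rᵐᵒᵖ Rᵐᵒᵖ, Module.Projective Rᵐᵒᵖ K := by
    intro K
    haveI := hher (K.map e.toLinearMap)
    exact Module.Projective.of_equiv (e.submoduleMap K).symm
  exact main_dual_baer hproj hnoe ‹Module.Injective Rᵐᵒᵖ M›
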